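/- (PELT condition for the logarithmic multiscale penalty.) Let y : ℕ → ℝ and β ≥ 0. Then for all natural numbers s < s' < t, one has (SS_{s+1:s'} − β·log(s'−s)) + (SS_{s'+1:t} − β·log(t−s')) − β·log 2 ≤ SS_{s+1:t} − β·log(t−s). -/
import Mathlib


/-- `ȳ_{a+1:b}`: the empirical mean of `y` over the indices `a+1, …, b`. -/
noncomputable def ybar (y : ℕ → ℝ) (a b : ℕ) : ℝ :=
  (1 / ((b : ℝ) - (a : ℝ))) * ∑ i ∈ Finset.Icc (a + 1) b, y i

/-- `SS_{a+1:b}`: the within-segment sum of squares of `y` over `a+1, …, b`. -/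
noncomputable def SS (y : ℕ → ℝ) (a b : ℕ) : ℝ :=
  ∑ i ∈ Finset.Icc (a + 1) b, (y i - ybar y a b) ^ 2

lemma SS_min (y : ℕ → ℝ) (a b : ℕ) (h : a < b) (c : ℝ) :
    SS y a b ≤ ∑ i ∈ Finset.Icc (a + 1) b, (y i - c) ^ 2 := by
  set m := ybar y a b with hm
  have hnpos : (0:ℝ) < (b:ℝ) - a := by
    have := (Nat.cast_lt (α := ℝ)).2 h
    linarith
  have hcard : ((Finset.Icc (a+1) b).card : ℝ) = (b:ℝ) - a := by
    rw [Nat.card_Icc]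
    have : b + 1 - (a + 1) = b - a := by omega
    rw [this, Nat.cast_sub h.le]
  have hmean : ((b:ℝ) - a) * m = ∑ i ∈ Finset.Icc (a+1) b, y i := by
    rw [hm, ybar]
    field_simp
  have hcenter : ∑ i ∈ Finset.Icc (a+1) b, (y i - m) = 0 := by
    rw [Finset.sum_sub_distrib, Finset.sum_const, nsmul_eq_mul, hcard]
    linarith [hmean]
  have expand : ∀ i ∈ Finset.Icc (a+1) b,
      (y i - c)^2 = (y i - m)^2 + (2*(m - c)) * (y i - m) + (m - c)^2 := by
    intro i _; ring
  rw [Finset.sum_congr rfl expand, Finset.sum_add_distrib, Finset.sum_add_distrib,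
    ← Finset.mul_sum, hcenter, Finset.sum_const, nsmul_eq_mul, hcard]
  have : 0 ≤ ((b:ℝ) - a) * (m - c)^2 := by positivity
  unfold SS
  rw [← hm]
  nlinarith

/-- PELT condition for the logarithmic multiscale penalty: for `β ≥ 0`
and naturals `s < s' < t`,
`(SS_{s+1:s'} − β·log(s'−s)) + (SS_{s'+1:t} − β·log(t−s')) − β·log 2
  ≤ SS_{s+1:t} − β·log(t−s)`. -/
theorem pelt_condition_log (y : ℕ → ℝ) (β : ℝ) (hβ : 0 ≤ β) :
    ∀ s s' t : ℕ, s < s' → s' < t →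
      (SS y s s' - β * Real.log ((s' : ℝ) - (s : ℝ))) +
        (SS y s' t - β * Real.log ((t : ℝ) - (s' : ℝ))) - β * Real.log 2
      ≤ SS y s t - β * Real.log ((t : ℝ) - (s : ℝ)) := by
  intro s s' t h1 h2
  -- sum of squares part
  have hsplit : SS y s s' + SS y s' t ≤ SS y s t := by
    have hle := SS_min y s s' h1 (ybar y s t)
    have hle' := SS_min y s' t h2 (ybar y s t)
    have hsum : ∑ i ∈ Finset.Icc (s+1) s', (y i - ybar y s t)^2 +
        ∑ i ∈ Finset.Icc (s'+1) t, (y i - ybar y s t)^2 = SS y s t := by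
      unfold SS
      rw [Finset.Icc_add_one_left_eq_Ioc, Finset.Icc_add_one_left_eq_Ioc, Finset.Icc_add_one_left_eq_Ioc]
      exact Finset.sum_Ioc_consecutive _ h1.le h2.le
    linarith
  -- log part
  have ha : (1:ℝ) ≤ (s':ℝ) - s := by
    have := (Nat.cast_le (α := ℝ)).2 (Nat.succ_le_of_lt h1)
    push_cast at this; linarith
  have hb : (1:ℝ) ≤ (t:ℝ) - s' := by
    have := (Nat.cast_le (α := ℝ)).2 (Nat.succ_le_of_lt h2)
    push_cast at this; linarith
  have hlog : Real.log ((t:ℝ) - s) ≤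
      Real.log ((s':ℝ) - s) + Real.log ((t:ℝ) - s') + Real.log 2 := by
    have hkey : (t:ℝ) - s ≤ ((s':ℝ) - s) * ((t:ℝ) - s') * 2 := by
      nlinarith
    have hposr : (0:ℝ) < ((s':ℝ) - s) * ((t:ℝ) - s') * 2 := by nlinarith
    calc Real.log ((t:ℝ) - s) ≤ Real.log (((s':ℝ) - s) * ((t:ℝ) - s') * 2) :=
          Real.log_le_log (by nlinarith) hkey
      _ = Real.log ((s':ℝ) - s) + Real.log ((t:ℝ) - s') + Real.log 2 := by
          rw [Real.log_mul (by nlinarith) (by norm_num),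
            Real.log_mul (by nlinarith) (by nlinarith)]
  have := mul_le_mul_of_nonneg_left hlog hβ
  nlinarith
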